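/- For every n ≥ 2 there exists a 2-AND-OR-BN F on n nodes such that for every observation set S, if F is observable with S then S is the whole set of n nodes (i.e., all n nodes must be observed); concretely, the BN defined by F(x)_i = x_i ∧ x_n for i ∈ {1,…,n−1} and F(x)_n = x_n ∧ x_1 has this property. -/
import Mathlib


/-- `F` is observable with observation set `S` if the map from an initial state to its
output sequence (the restriction of each iterate to `S`) is injective. -/
def observable {n : ℕ} (F : (Fin n → Bool) → (Fin n → Bool)) (S : Finset (Fin n)) : Prop :=
  Function.Injective (fun (x : Fin n → Bool) => fun (t : ℕ) (i : S) => (F^[t] x) i.val)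

/-- `F` is a `K`-AND-OR-BN: each local function is the AND or the OR of `K` literals
on pairwise distinct variables (a literal is `x_{i_j} XOR b_j`). -/
def isAndOrBN {n : ℕ} (K : ℕ) (F : (Fin n → Bool) → (Fin n → Bool)) : Prop :=
  ∀ i : Fin n, ∃ idx : Fin K → Fin n, Function.Injective idx ∧ ∃ b : Fin K → Bool,
    (∀ x, F x i = Finset.univ.inf (fun j => Bool.xor (x (idx j)) (b j))) ∨
    (∀ x, F x i = Finset.univ.sup (fun j => Bool.xor (x (idx j)) (b j)))

lemma inf_fin2 (f : Fin 2 → Bool) : Finset.univ.inf f = (f 0 && f 1) := by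
  have h : (Finset.univ : Finset (Fin 2)) = {0, 1} := by decide
  rw [h, Finset.inf_insert, Finset.inf_singleton]
  rfl

theorem worst_case_two_and_or (n : ℕ) (hn : 2 ≤ n) :
    ∃ F : (Fin n → Bool) → (Fin n → Bool),
      isAndOrBN 2 F ∧
      (∀ (x : Fin n → Bool) (i : Fin n),
        F x i = if i.val = n - 1 then x i && x ⟨0, by omega⟩ else x i && x ⟨n - 1, by omega⟩) ∧
      (∀ S : Finset (Fin n), observable F S → S = Finset.univ) := by
  have h0 : 0 < n := by omega
  have hlast : n - 1 < n := by omega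
  set z : Fin n := ⟨0, h0⟩ with hz
  set l : Fin n := ⟨n - 1, hlast⟩ with hl
  have hzl : z ≠ l := by
    simp only [hz, hl, ne_eq, Fin.mk.injEq]
    omega
  refine ⟨fun x i => if i.val = n - 1 then x i && x z else x i && x l, ?_, ?_, ?_⟩
  · -- isAndOrBN
    intro i
    by_cases hi : i.val = n - 1
    · refine ⟨![i, z], ?_, fun _ => false, Or.inl ?_⟩
      · have hiz : i ≠ z := by
          intro h; rw [h, hz] at hi; simp at hi; omega
        intro a b hab
        fin_cases a <;> fin_cases b <;> simp_all
      · intro x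
        rw [inf_fin2]
        simp [hi]
    · refine ⟨![i, l], ?_, fun _ => false, Or.inl ?_⟩
      · have hil : i ≠ l := by
          intro h; rw [h, hl] at hi; simp at hi
        intro a b hab
        fin_cases a <;> fin_cases b <;> simp_all
      · intro x
        rw [inf_fin2]
        simp [hi]
  · intro x i; rfl
  · intro S hS
    by_contra hne
    obtain ⟨i, hi⟩ : ∃ i : Fin n, i ∉ S := by
      by_contra h
      push_neg at h
      exact hne (Finset.eq_univ_iff_forall.mpr h)
    set F : (Fin n → Bool) → (Fin n → Bool) :=
      fun x i => if i.val = n - 1 then x i && x z else x i && x l with hF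
    set x : Fin n → Bool := fun _ => false with hx
    set y : Fin n → Bool := fun j => decide (j = i) with hy
    have hFx : F x = x := by
      funext j
      simp [hF, hx]
    have hFy : F y = x := by
      funext j
      by_cases hj : j.val = n - 1
      · have hjl : j = l := by simp [hl, Fin.ext_iff, hj]
        simp only [hF, hx, hj, if_pos]
        by_cases hzi : z = i
        · have : y j = false := by
            simp only [hy, hjl, decide_eq_false_iff_not]
            exact fun h => hzl (hzi.trans h.symm)
          simp [this]
        · have : y z = false := by simp [hy, hzi]
          simp [this]
      · simp only [hF, hx, hj, if_false]
        by_cases hli : l = i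
        · have : y j = false := by
            simp only [hy, decide_eq_false_iff_not]
            intro h
            exact hj (by rw [h, ← hli])
          simp [this]
        · have : y l = false := by simp [hy, hli]
          simp [this]
    have hItx : ∀ t, F^[t] x = x := fun t => Function.iterate_fixed hFx t
    have hIty : ∀ t, 1 ≤ t → F^[t] y = x := by
      intro t ht
      obtain ⟨s, rfl⟩ := Nat.exists_eq_add_of_le ht
      rw [add_comm, Function.iterate_add_apply, Function.iterate_one, hFy, hItx]
    have heq : x = y := by
      apply hS
      funext t
      funext j
      rcases Nat.eq_zero_or_pos t with rfl | ht
      · simp only [Function.iterate_zero, id_eq]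
        have hji : (j : Fin n) ≠ i := fun h => hi (h ▸ j.2)
        simp [hx, hy, hji]
      · simp [hItx, hIty t ht]
    have : x i = y i := by rw [heq]
    simp [hx, hy] at this
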